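/- For any integer n > 1, at most one prime divides gcd_{0<k<n} C(n,k). -/

import Mathlib

lemma aux_not_dvd_choose (p : ℕ) (hp : p.Prime) (a m : ℕ) (hm : ¬ p ∣ m) :
    ¬ p ∣ Nat.choose (p ^ a * m) (p ^ a) := by
  haveI : Fact p.Prime := ⟨hp⟩
  induction a with
  | zero =>
      simpa [Nat.choose_one_right] using hm
  | succ a ih =>
      intro hdvd
      apply ih
      have hcong := @Choose.choose_modEq_choose_mod_mul_choose_div_nat
        (p ^ (a+1) * m) (p ^ (a+1)) p _
      have hmodn : (p ^ (a+1) * m) % p = 0 := by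
        simp [Nat.mul_mod, Nat.pow_mod]
      have hmodk : (p ^ (a+1)) % p = 0 := by
        simp [Nat.pow_mod]
      have hdivn : (p ^ (a+1) * m) / p = p ^ a * m := by
        rw [pow_succ, mul_comm (p^a) p, mul_assoc, Nat.mul_div_cancel_left _ hp.pos]
      have hdivk : (p ^ (a+1)) / p = p ^ a := by
        rw [pow_succ, Nat.mul_div_cancel _ hp.pos]
      rw [hmodn, hmodk, hdivn, hdivk] at hcong
      simp only [Nat.choose_self, one_mul] at hcong
      have := (Nat.modEq_zero_iff_dvd.mp (((Nat.modEq_zero_iff_dvd.mpr hdvd).symm.trans hcong).symm))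
      exact this

theorem stmt_16 (n : ℕ) (hn : 1 < n) (p₁ p₂ : ℕ) (hp₁ : p₁.Prime) (hp₂ : p₂.Prime)
    (h₁ : p₁ ∣ Finset.gcd (Finset.Ioo 0 n) (fun k => Nat.choose n k))
    (h₂ : p₂ ∣ Finset.gcd (Finset.Ioo 0 n) (fun k => Nat.choose n k)) :
    p₁ = p₂ := by
  have hn0 : n ≠ 0 := by omega
  -- each prime divides n = choose n 1
  have key : ∀ p : ℕ, p.Prime → p ∣ Finset.gcd (Finset.Ioo 0 n) (fun k => Nat.choose n k) →
      n = p ^ (n.factorization p) := by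
    intro p hp hdvd
    have hpn : p ∣ n := by
      have h1 : (1 : ℕ) ∈ Finset.Ioo 0 n := by simp [hn]
      have := hdvd.trans (Finset.gcd_dvd h1)
      simpa using this
    set a := n.factorization p with ha
    set m := n / p ^ a with hm
    have hpa : p ^ a ∣ n := Nat.ordProj_dvd n p
    have hnm : n = p ^ a * m := by rw [hm, Nat.mul_div_cancel' hpa]
    have hpm : ¬ p ∣ m := Nat.not_dvd_ordCompl hp hn0
    by_contra hne
    -- then m > 1, so p^a < n and p^a > 0
    have hm1 : 1 < m := by
      rcases Nat.lt_or_ge m 2 with h | h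
      · interval_cases m
        · exact absurd (by simpa using hnm) hn0
        · exact absurd (by simpa using hnm) hne
      · exact h
    have hlt : p ^ a < n := by
      calc p ^ a = p ^ a * 1 := (mul_one _).symm
        _ < p ^ a * m := by
            exact Nat.mul_lt_mul_of_le_of_lt (le_refl _) hm1 (Nat.pow_pos hp.pos : 0 < p ^ a)
        _ = n := hnm.symm
    have hmem : p ^ a ∈ Finset.Ioo 0 n := by
      simp [Nat.pow_pos, hp.pos, hlt, (Nat.pow_pos hp.pos : 0 < p ^ a)]
    have hdc : p ∣ Nat.choose n (p ^ a) := hdvd.trans (Finset.gcd_dvd hmem)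
    rw [hnm] at hdc
    exact aux_not_dvd_choose p hp a m hpm hdc
  have e1 := key p₁ hp₁ h₁
  have e2 := key p₂ hp₂ h₂
  -- n is a power of both p₁ and p₂
  have hpos : 0 < n.factorization p₁ := by
    by_contra h
    simp [Nat.eq_zero_of_not_pos h] at e1
    omega
  have : p₁ ∣ n := e1 ▸ dvd_pow_self p₁ (by omega)
  have hdvd2 : p₁ ∣ p₂ ^ (n.factorization p₂) := e2 ▸ this
  have := hp₁.dvd_of_dvd_pow hdvd2
  exact (Nat.prime_dvd_prime_iff_eq hp₁ hp₂).mp this
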